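/- Let a, b be multiplicative arithmetic functions (a_{mn} = a_m a_n for gcd(m,n)=1, a_1 = b_1 = 1) with complex values such that a_m = b_m whenever m ≡ 1 (mod N). Let c ∈ (ℤ/Nℤ)× and let H be the subgroup of classes admitting infinitely many pairwise coprime representatives l with a_l ≠ 0. Suppose c ∈ H and l, l' are two integers in the class c with a_l ≠ 0 and a_{l'} ≠ 0. Then b_l / a_l = b_{l'} / a_{l'}. -/

import Mathlib

private lemma mult_prod (f : ℕ → ℂ) (hf1 : f 1 = 1)
    (hfmul : ∀ m n : ℕ, Nat.Coprime m n → f (m * n) = f m * f n)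
    (t : Finset ℕ) (h : (t : Set ℕ).Pairwise Nat.Coprime) :
    f (∏ x ∈ t, x) = ∏ x ∈ t, f x := by
  induction t using Finset.cons_induction with
  | empty => simpa
  | cons x s hx ih =>
    have hpair : (s : Set ℕ).Pairwise Nat.Coprime := by
      refine h.mono ?_; intro y hy; simp [hy]
    have hcop : Nat.Coprime x (∏ y ∈ s, y) := by
      refine Nat.Coprime.prod_right fun y hy => ?_
      exact h (by simp) (by simp [hy]) (by rintro rfl; exact hx hy)
    rw [Finset.prod_cons, Finset.prod_cons, hfmul _ _ hcop, ih hpair]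

/-- the ratio `b l / a l` is independent of the representative `l`
of a class `c ∈ H` with `a l ≠ 0`. -/
theorem stmt_5 (N : ℕ) (hN : 0 < N) (a b : ℕ → ℂ)
    (ha1 : a 1 = 1) (hb1 : b 1 = 1)
    (hamul : ∀ m n : ℕ, Nat.Coprime m n → a (m * n) = a m * a n)
    (hbmul : ∀ m n : ℕ, Nat.Coprime m n → b (m * n) = b m * b n)
    (hab : ∀ m : ℕ, (m : ZMod N) = 1 → a m = b m)
    (c : (ZMod N)ˣ)
    (hcH : ∃ L : Set ℕ, L.Infinite ∧ L.Pairwise Nat.Coprime ∧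
      ∀ l ∈ L, 0 < l ∧ ((l : ZMod N) = (c : ZMod N)) ∧ a l ≠ 0)
    (l l' : ℕ) (hl : 0 < l) (hl' : 0 < l')
    (hlc : (l : ZMod N) = (c : ZMod N)) (hl'c : (l' : ZMod N) = (c : ZMod N))
    (hal : a l ≠ 0) (hal' : a l' ≠ 0) :
    b l / a l = b l' / a l' := by
  haveI : NeZero N := ⟨hN.ne'⟩
  obtain ⟨L, hLinf, hLpair, hLmem⟩ := hcH
  set S : Set ℕ := {x | x ∈ L ∧ Nat.Coprime x (l * l')} with hSdef
  have hSsub : S ⊆ L := fun x hx => hx.1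
  -- S is infinite
  have hll' : l * l' ≠ 0 := by positivity
  have hfin : (L \ S).Finite := by
    have hsub : L \ S ⊆ ⋃ p ∈ (l * l').primeFactors, {x | x ∈ L ∧ p ∣ x} := by
      rintro x ⟨hxL, hxS⟩
      have hnc : ¬ Nat.Coprime x (l * l') := fun h => hxS ⟨hxL, h⟩
      obtain ⟨p, hp, hpd⟩ := Nat.exists_prime_and_dvd hnc
      have hpx : p ∣ x := hpd.trans (Nat.gcd_dvd_left _ _)
      have hpll' : p ∣ l * l' := hpd.trans (Nat.gcd_dvd_right _ _)
      exact Set.mem_biUnion (Nat.mem_primeFactors.mpr ⟨hp, hpll', hll'⟩) ⟨hxL, hpx⟩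
    refine Set.Finite.subset ?_ hsub
    refine Set.Finite.biUnion ((l * l').primeFactors.finite_toSet) ?_
    intro p hp
    have hp' : p.Prime := Nat.prime_of_mem_primeFactors (Finset.mem_coe.mp hp)
    refine Set.Subsingleton.finite ?_
    rintro x ⟨hxL, hpx⟩ y ⟨hyL, hpy⟩
    by_contra hxy
    have hco := hLpair hxL hyL hxy
    exact hp'.one_lt.ne' (Nat.dvd_one.mp (hco ▸ Nat.dvd_gcd hpx hpy))
  have hSinf : S.Infinite := by
    have := hLinf.diff hfin
    rwa [Set.diff_diff_cancel_left hSsub] at this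
  -- pick orderOf c - 1 elements
  set k := orderOf c with hk
  have hkpos : 0 < k := orderOf_pos c
  obtain ⟨t, htS, htcard⟩ := hSinf.exists_subset_card_eq (k - 1)
  set m := ∏ x ∈ t, x with hm
  have htpair : (t : Set ℕ).Pairwise Nat.Coprime := fun x hx y hy =>
    hLpair (hSsub (htS hx)) (hSsub (htS hy))
  -- congruence: each x in t maps to c
  have hcast : ∀ x ∈ t, ((x : ZMod N)) = (c : ZMod N) := fun x hx =>
    (hLmem x (hSsub (htS hx))).2.1
  have hmcast : ((m : ZMod N)) = (c : ZMod N) ^ (k - 1) := by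
    rw [hm]
    push_cast
    rw [Finset.prod_congr rfl hcast, Finset.prod_const, htcard]
  have hcop : ∀ j : ℕ, 0 < j → Nat.Coprime j (l * l') → ((j * m : ZMod N)) = 1 → True := fun _ _ _ _ => trivial
  -- key congruences
  have hlm1 : ((l * m : ℕ) : ZMod N) = 1 := by
    push_cast
    rw [hlc, hmcast, ← pow_succ']
    have hke : k - 1 + 1 = k := by omega
    rw [hke, ← Units.val_pow_eq_pow_val, hk, pow_orderOf_eq_one, Units.val_one]
  have hl'm1 : ((l' * m : ℕ) : ZMod N) = 1 := by
    push_cast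
    rw [hl'c, hmcast, ← pow_succ']
    have hke : k - 1 + 1 = k := by omega
    rw [hke, ← Units.val_pow_eq_pow_val, hk, pow_orderOf_eq_one, Units.val_one]
  -- coprimality of l, l' with m
  have hcoplm : Nat.Coprime l m := by
    refine Nat.Coprime.prod_right fun x hx => ?_
    exact ((htS hx).2.coprime_dvd_right (Dvd.intro l' rfl)).symm
  have hcopl'm : Nat.Coprime l' m := by
    refine Nat.Coprime.prod_right fun x hx => ?_
    exact ((htS hx).2.coprime_dvd_right (Dvd.intro_left l rfl)).symm
  -- a m ≠ 0
  have hamne : a m ≠ 0 := by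
    rw [hm, mult_prod a ha1 hamul t htpair]
    exact Finset.prod_ne_zero_iff.mpr fun x hx => (hLmem x (hSsub (htS hx))).2.2
  -- main equations
  have e1 : a l * a m = b l * b m := by
    have := hab (l * m) hlm1
    rwa [hamul _ _ hcoplm, hbmul _ _ hcoplm] at this
  have e2 : a l' * a m = b l' * b m := by
    have := hab (l' * m) hl'm1
    rwa [hamul _ _ hcopl'm, hbmul _ _ hcopl'm] at this
  have hbmne : b m ≠ 0 := by
    intro h
    rw [h, mul_zero] at e1
    exact (mul_ne_zero hal hamne) e1
  rw [div_eq_div_iff hal hal']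
  field_simp at e1 e2 ⊢
  -- b l * a l' = b l' * a l
  have : b l * b m * (a l' * a m) = b l' * b m * (a l * a m) := by
    rw [← e1, mul_comm (b l') (b m), ← e2]; ring
  have h3 : (b l * a l') * (b m * a m) = (b l' * a l) * (b m * a m) := by
    linear_combination this
  exact mul_right_cancel₀ (mul_ne_zero hbmne hamne) (h3.trans (by ring))
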